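/- In the graph G' of the DKS reduction (S → c_i for all i; c_x → d_j and c_y → d_j for each edge e_j = (v_x,v_y)), every d_j has out-degree 0, and for any vertex set B ⊆ {c_i} ∪ {d_j} with |B| ≤ b, there exists a set B' ⊆ {c_i} with |B'| ≤ b such that the number of S-reachable vertices after deleting B' is at most the number after deleting B. Hence an optimal blocker set can be chosen entirely among the c-vertices. -/

import Mathlib

/-- Reachability from `s` in the induced subgraph obtained by deleting `B`. -/
def reachOutside {V : Type*} (adj : V → V → Prop) (B : Set V) (s v : V) : Prop :=
  Relation.ReflTransGen (fun a b => adj a b ∧ a ∉ B ∧ b ∉ B) s v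

/-- `fCount adj s B` is the number of vertices reachable from `s` after deleting `B`. -/
noncomputable def fCount {V : Type*} (adj : V → V → Prop) (s : V) (B : Set V) : ℕ :=
  {v | reachOutside adj B s v}.ncard

/-- Vertices of the DKS-reduction digraph `G'`. -/
abbrev DKSVert (n : ℕ) (G : SimpleGraph (Fin n)) : Type := Unit ⊕ (Fin n) ⊕ G.edgeSet

/-- Edges of `G'`: `S → c_i` for every `i`, and `c_x → d_e` whenever `x ∈ e`. -/
def dksAdj {n : ℕ} (G : SimpleGraph (Fin n)) : DKSVert n G → DKSVert n G → Prop :=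
  fun a b =>
    match a, b with
    | Sum.inl _, Sum.inr (Sum.inl _) => True
    | Sum.inr (Sum.inl x), Sum.inr (Sum.inr e) => x ∈ (e : Sym2 (Fin n))
    | _, _ => False

section Aux

variable {n : ℕ} {G : SimpleGraph (Fin n)}

private lemma reach_iff (X : Set (DKSVert n G)) (hS : (Sum.inl () : DKSVert n G) ∉ X)
    (v : DKSVert n G) :
    reachOutside (dksAdj G) X (Sum.inl ()) v ↔
      v = Sum.inl () ∨
      (∃ i : Fin n, v = Sum.inr (Sum.inl i) ∧ v ∉ X) ∨
      (∃ e : G.edgeSet, v = Sum.inr (Sum.inr e) ∧ v ∉ X ∧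
        ∃ i : Fin n, i ∈ (e : Sym2 (Fin n)) ∧ (Sum.inr (Sum.inl i) : DKSVert n G) ∉ X) := by
  constructor
  · intro h
    induction h with
    | refl => exact Or.inl rfl
    | @tail b c hb step ih =>
      obtain ⟨hadj, hbX, hcX⟩ := step
      rcases ih with rfl | ⟨i, rfl, hiX⟩ | ⟨e, rfl, _, _⟩
      · rcases c with _ | (i | e)
        · simp [dksAdj] at hadj
        · exact Or.inr (Or.inl ⟨i, rfl, hcX⟩)
        · simp [dksAdj] at hadj
      · rcases c with _ | (j | e)
        · simp [dksAdj] at hadj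
        · simp [dksAdj] at hadj
        · refine Or.inr (Or.inr ⟨e, rfl, hcX, i, ?_, hbX⟩)
          simpa [dksAdj] using hadj
      · rcases c with _ | (j | e') <;> simp [dksAdj] at hadj
  · rintro (rfl | ⟨i, rfl, hiX⟩ | ⟨e, rfl, heX, i, hie, hiX⟩)
    · exact Relation.ReflTransGen.refl
    · exact Relation.ReflTransGen.single ⟨by simp [dksAdj], hS, hiX⟩
    · exact Relation.ReflTransGen.head ⟨by simp [dksAdj], hS, hiX⟩
        (Relation.ReflTransGen.single ⟨by simpa [dksAdj] using hie, hiX, heX⟩)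

private lemma fCount_eq (X : Set (DKSVert n G)) (hS : (Sum.inl () : DKSVert n G) ∉ X) :
    fCount (dksAdj G) (Sum.inl ()) X =
      1 + {i : Fin n | (Sum.inr (Sum.inl i) : DKSVert n G) ∉ X}.ncard +
        {e : G.edgeSet | (Sum.inr (Sum.inr e) : DKSVert n G) ∉ X ∧
          ∃ i : Fin n, i ∈ (e : Sym2 (Fin n)) ∧
            (Sum.inr (Sum.inl i) : DKSVert n G) ∉ X}.ncard := by
  classical
  have hset : {v | reachOutside (dksAdj G) X (Sum.inl ()) v} =
      ({Sum.inl ()} : Set (DKSVert n G)) ∪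
      ((fun i : Fin n => (Sum.inr (Sum.inl i) : DKSVert n G)) ''
        {i : Fin n | (Sum.inr (Sum.inl i) : DKSVert n G) ∉ X}) ∪
      ((fun e : G.edgeSet => (Sum.inr (Sum.inr e) : DKSVert n G)) ''
        {e : G.edgeSet | (Sum.inr (Sum.inr e) : DKSVert n G) ∉ X ∧
          ∃ i : Fin n, i ∈ (e : Sym2 (Fin n)) ∧
            (Sum.inr (Sum.inl i) : DKSVert n G) ∉ X}) := by
    ext v
    rw [Set.mem_setOf_eq, reach_iff X hS v]
    constructor
    · rintro (rfl | ⟨i, rfl, h⟩ | ⟨e, rfl, h1, h2⟩)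
      · exact Or.inl (Or.inl rfl)
      · exact Or.inl (Or.inr ⟨i, h, rfl⟩)
      · exact Or.inr ⟨e, ⟨h1, h2⟩, rfl⟩
    · rintro ((rfl | ⟨i, h, rfl⟩) | ⟨e, ⟨h1, h2⟩, rfl⟩)
      · exact Or.inl rfl
      · exact Or.inr (Or.inl ⟨i, rfl, h⟩)
      · exact Or.inr (Or.inr ⟨e, rfl, h1, h2⟩)
  have hinj1 : Function.Injective (fun i : Fin n => (Sum.inr (Sum.inl i) : DKSVert n G)) := by
    intro a b h; simpa using h
  have hinj2 : Function.Injective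
      (fun e : G.edgeSet => (Sum.inr (Sum.inr e) : DKSVert n G)) := by
    intro a b h; simpa using h
  set A : Set (Fin n) := {i : Fin n | (Sum.inr (Sum.inl i) : DKSVert n G) ∉ X} with hA
  set Bs : Set G.edgeSet := {e : G.edgeSet | (Sum.inr (Sum.inr e) : DKSVert n G) ∉ X ∧
      ∃ i : Fin n, i ∈ (e : Sym2 (Fin n)) ∧ (Sum.inr (Sum.inl i) : DKSVert n G) ∉ X} with hBs
  have hd1 : Disjoint (({Sum.inl ()} : Set (DKSVert n G)) ∪
      ((fun i : Fin n => (Sum.inr (Sum.inl i) : DKSVert n G)) '' A))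
      ((fun e : G.edgeSet => (Sum.inr (Sum.inr e) : DKSVert n G)) '' Bs) := by
    rw [Set.disjoint_left]
    rintro v ((rfl | ⟨i, _, rfl⟩)) ⟨e, _, hv⟩ <;> simp at hv
  have hd2 : Disjoint ({Sum.inl ()} : Set (DKSVert n G))
      ((fun i : Fin n => (Sum.inr (Sum.inl i) : DKSVert n G)) '' A) := by
    rw [Set.disjoint_left]
    rintro v rfl ⟨i, _, hv⟩; simp at hv
  rw [fCount, hset, Set.ncard_union_eq hd1 (Set.toFinite _) (Set.toFinite _),
    Set.ncard_union_eq hd2 (Set.toFinite _) (Set.toFinite _),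
    Set.ncard_singleton, Set.ncard_image_of_injective _ hinj1,
    Set.ncard_image_of_injective _ hinj2]

private lemma comb (Xd : Set G.edgeSet) :
    ∀ Xc : Set (Fin n), ∃ X' : Set (Fin n),
      X'.ncard ≤ Xc.ncard + Xd.ncard ∧
      {i : Fin n | i ∉ X'}.ncard +
        {e : G.edgeSet | ∃ i : Fin n, i ∈ (e : Sym2 (Fin n)) ∧ i ∉ X'}.ncard ≤
      {i : Fin n | i ∉ Xc}.ncard +
        {e : G.edgeSet | e ∉ Xd ∧
          ∃ i : Fin n, i ∈ (e : Sym2 (Fin n)) ∧ i ∉ Xc}.ncard := by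
  classical
  refine Set.Finite.induction_on (motive := fun Xd _ => ∀ Xc : Set (Fin n), ∃ X' : Set (Fin n),
      X'.ncard ≤ Xc.ncard + Xd.ncard ∧
      {i : Fin n | i ∉ X'}.ncard +
        {e : G.edgeSet | ∃ i : Fin n, i ∈ (e : Sym2 (Fin n)) ∧ i ∉ X'}.ncard ≤
      {i : Fin n | i ∉ Xc}.ncard +
        {e : G.edgeSet | e ∉ Xd ∧
          ∃ i : Fin n, i ∈ (e : Sym2 (Fin n)) ∧ i ∉ Xc}.ncard)
    Xd (Set.toFinite Xd) ?_ ?_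
  · intro Xc
    refine ⟨Xc, by simp, ?_⟩
    simp
  · intro a s ha hs ih Xc
    by_cases hex : ∃ i : Fin n, i ∈ (a : Sym2 (Fin n)) ∧ i ∉ Xc
    · obtain ⟨i0, hi0a, hi0c⟩ := hex
      obtain ⟨X', hcard, hcount⟩ := ih (insert i0 Xc)
      refine ⟨X', ?_, ?_⟩
      · calc X'.ncard ≤ (insert i0 Xc).ncard + s.ncard := hcard
          _ ≤ (Xc.ncard + 1) + s.ncard := by
              gcongr; exact Set.ncard_insert_le _ _
          _ = Xc.ncard + (insert a s).ncard := by
              rw [Set.ncard_insert_of_notMem ha (Set.toFinite s)]; ring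
      · have h1 : {i : Fin n | i ∉ insert i0 Xc}.ncard + 1 = {i : Fin n | i ∉ Xc}.ncard := by
          have : {i : Fin n | i ∉ insert i0 Xc} = {i : Fin n | i ∉ Xc} \ {i0} := by
            ext j; simp [and_comm]
          rw [this]
          exact Set.ncard_diff_singleton_add_one hi0c (Set.toFinite _)
        have h2 : {e : G.edgeSet | e ∉ s ∧
              ∃ i : Fin n, i ∈ (e : Sym2 (Fin n)) ∧ i ∉ insert i0 Xc}.ncard ≤
            {e : G.edgeSet | e ∉ insert a s ∧
              ∃ i : Fin n, i ∈ (e : Sym2 (Fin n)) ∧ i ∉ Xc}.ncard + 1 := by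
          have hsub : {e : G.edgeSet | e ∉ s ∧
                ∃ i : Fin n, i ∈ (e : Sym2 (Fin n)) ∧ i ∉ insert i0 Xc} ⊆
              insert a {e : G.edgeSet | e ∉ insert a s ∧
                ∃ i : Fin n, i ∈ (e : Sym2 (Fin n)) ∧ i ∉ Xc} := by
            rintro e ⟨hes, i, hie, hic⟩
            rcases eq_or_ne e a with rfl | hne
            · exact Set.mem_insert _ _
            · refine Set.mem_insert_of_mem _ ⟨?_, i, hie, fun h => hic (Set.mem_insert_of_mem _ h)⟩
              simp [hne, hes]
          calc _ ≤ (insert a {e : G.edgeSet | e ∉ insert a s ∧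
                ∃ i : Fin n, i ∈ (e : Sym2 (Fin n)) ∧ i ∉ Xc}).ncard :=
              Set.ncard_le_ncard hsub (Set.toFinite _)
            _ ≤ _ := Set.ncard_insert_le _ _
        omega
    · obtain ⟨X', hcard, hcount⟩ := ih Xc
      refine ⟨X', ?_, ?_⟩
      · calc X'.ncard ≤ Xc.ncard + s.ncard := hcard
          _ ≤ Xc.ncard + (insert a s).ncard := by
              have := Set.ncard_le_ncard (Set.subset_insert a s) (Set.toFinite (insert a s))
              omega
      · have heq : {e : G.edgeSet | e ∉ s ∧
              ∃ i : Fin n, i ∈ (e : Sym2 (Fin n)) ∧ i ∉ Xc} =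
            {e : G.edgeSet | e ∉ insert a s ∧
              ∃ i : Fin n, i ∈ (e : Sym2 (Fin n)) ∧ i ∉ Xc} := by
          ext e
          simp only [Set.mem_setOf_eq, Set.mem_insert_iff]
          constructor
          · rintro ⟨hes, hP⟩
            refine ⟨?_, hP⟩
            rintro (rfl | h)
            · exact hex hP
            · exact hes h
          · rintro ⟨hes, hP⟩
            exact ⟨fun h => hes (Or.inr h), hP⟩
        rw [← heq]
        exact hcount

end Aux

/-- every `d`-vertex of `G'` has out-degree 0, and for any blocker set
`B` of non-seed vertices with `|B| ≤ b` there is a blocker set `B'` consisting only of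
`c`-vertices with `|B'| ≤ b` that is at least as good. -/
theorem stmt11 (n b : ℕ) (G : SimpleGraph (Fin n)) :
    (∀ (e : G.edgeSet) (w : DKSVert n G), ¬ dksAdj G (Sum.inr (Sum.inr e)) w) ∧
    (∀ B : Set (DKSVert n G), (Sum.inl () : DKSVert n G) ∉ B → B.ncard ≤ b →
      ∃ B' : Set (DKSVert n G),
        B' ⊆ {w | ∃ i : Fin n, w = Sum.inr (Sum.inl i)} ∧ B'.ncard ≤ b ∧
          fCount (dksAdj G) (Sum.inl ()) B' ≤ fCount (dksAdj G) (Sum.inl ()) B) := by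
  classical
  constructor
  · intro e w h
    rcases w with _ | (i | e') <;> simp [dksAdj] at h
  · intro B hSB hBb
    set Xc : Set (Fin n) := {i | (Sum.inr (Sum.inl i) : DKSVert n G) ∈ B} with hXc
    set Xd : Set G.edgeSet := {e | (Sum.inr (Sum.inr e) : DKSVert n G) ∈ B} with hXd
    -- B is the disjoint union of the images of Xc and Xd
    have hBeq : B = ((fun i : Fin n => (Sum.inr (Sum.inl i) : DKSVert n G)) '' Xc) ∪
        ((fun e : G.edgeSet => (Sum.inr (Sum.inr e) : DKSVert n G)) '' Xd) := by
      ext v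
      rcases v with _ | (i | e)
      · simp only [Set.mem_union, Set.mem_image]
        constructor
        · intro h; exact absurd h hSB
        · rintro (⟨i, _, h⟩ | ⟨e, _, h⟩) <;> simp at h
      · simp [Xc]
      · simp [Xd]
    have hinj1 : Function.Injective (fun i : Fin n => (Sum.inr (Sum.inl i) : DKSVert n G)) := by
      intro a b h; simpa using h
    have hinj2 : Function.Injective
        (fun e : G.edgeSet => (Sum.inr (Sum.inr e) : DKSVert n G)) := by
      intro a b h; simpa using h
    have hBcard : B.ncard = Xc.ncard + Xd.ncard := by
      rw [hBeq, Set.ncard_union_eq ?_ (Set.toFinite _) (Set.toFinite _),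
        Set.ncard_image_of_injective _ hinj1, Set.ncard_image_of_injective _ hinj2]
      rw [Set.disjoint_left]
      rintro v ⟨i, _, rfl⟩ ⟨e, _, hv⟩; simp at hv
    obtain ⟨X', hX'card, hX'count⟩ := comb Xd Xc
    refine ⟨(fun i : Fin n => (Sum.inr (Sum.inl i) : DKSVert n G)) '' X', ?_, ?_, ?_⟩
    · rintro w ⟨i, _, rfl⟩; exact ⟨i, rfl⟩
    · rw [Set.ncard_image_of_injective _ hinj1]
      omega
    · have hS' : (Sum.inl () : DKSVert n G) ∉
          (fun i : Fin n => (Sum.inr (Sum.inl i) : DKSVert n G)) '' X' := by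
        rintro ⟨i, _, h⟩; simp at h
      rw [fCount_eq _ hS', fCount_eq _ hSB]
      have mem1 : ∀ i : Fin n, (Sum.inr (Sum.inl i) : DKSVert n G) ∈
          (fun i : Fin n => (Sum.inr (Sum.inl i) : DKSVert n G)) '' X' ↔ i ∈ X' :=
        fun i => hinj1.mem_set_image
      have mem2 : ∀ e : G.edgeSet, (Sum.inr (Sum.inr e) : DKSVert n G) ∉
          (fun i : Fin n => (Sum.inr (Sum.inl i) : DKSVert n G)) '' X' := by
        rintro e ⟨i, _, h⟩; simp at h
      have e1 : {i : Fin n | (Sum.inr (Sum.inl i) : DKSVert n G) ∉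
          (fun i : Fin n => (Sum.inr (Sum.inl i) : DKSVert n G)) '' X'} =
          {i : Fin n | i ∉ X'} := by
        ext i; simp only [Set.mem_setOf_eq, mem1]
      have e2 : {e : G.edgeSet | (Sum.inr (Sum.inr e) : DKSVert n G) ∉
          (fun i : Fin n => (Sum.inr (Sum.inl i) : DKSVert n G)) '' X' ∧
          ∃ i : Fin n, i ∈ (e : Sym2 (Fin n)) ∧ (Sum.inr (Sum.inl i) : DKSVert n G) ∉
            (fun i : Fin n => (Sum.inr (Sum.inl i) : DKSVert n G)) '' X'} =
          {e : G.edgeSet | ∃ i : Fin n, i ∈ (e : Sym2 (Fin n)) ∧ i ∉ X'} := by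
        ext e
        simp only [Set.mem_setOf_eq, mem1, mem2 e, not_false_iff, true_and]
      have e3 : {i : Fin n | (Sum.inr (Sum.inl i) : DKSVert n G) ∉ B} =
          {i : Fin n | i ∉ Xc} := rfl
      have e4 : {e : G.edgeSet | (Sum.inr (Sum.inr e) : DKSVert n G) ∉ B ∧
          ∃ i : Fin n, i ∈ (e : Sym2 (Fin n)) ∧ (Sum.inr (Sum.inl i) : DKSVert n G) ∉ B} =
          {e : G.edgeSet | e ∉ Xd ∧ ∃ i : Fin n, i ∈ (e : Sym2 (Fin n)) ∧ i ∉ Xc} := rfl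
      rw [e1, e2, e3, e4]
      omega
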